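/- If τ is a probability distribution on {1,...,N}^d with uniformity condition w.r.t. every coordinate, then the Markov operator V_τ(μ) = Σ_i τ(i) μ^{f_i} (with f_i the canonical subcube similarities with ratio 1/N) maps the set P_d^{λ_{d-1}} of probability measures on [0,1]^d with all (d-1)-dimensional marginals equal to λ_{d-1} into itself. -/

import Mathlib

open MeasureTheory Set
open scoped ENNReal

lemma map_affine_volume (N : ℕ) (hN : 0 < N) (c : ℝ) :
    Measure.map (fun t : ℝ => (c + t) / N) volume = (N : ℝ≥0∞) • volume := by
  have h1 : (fun t : ℝ => (c + t) / N) = (fun u : ℝ => (N : ℝ)⁻¹ * u) ∘ (fun t => c + t) := by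
    funext t; simp [div_eq_inv_mul]
  have hN' : ((N : ℝ))⁻¹ ≠ 0 := by positivity
  rw [h1, ← Measure.map_map (by fun_prop) (by fun_prop),
    map_add_left_eq_self volume c, Real.map_volume_mul_left hN']
  congr 1
  rw [inv_inv, abs_of_nonneg (by positivity)]
  exact ENNReal.ofReal_natCast N

lemma tele (N : ℕ) (s : Set ℝ) (hs : MeasurableSet s) (k : ℕ) :
    ∑ l ∈ Finset.range k, volume (s ∩ Ioc ((l : ℝ)/N) (((l : ℝ)+1)/N))
      = volume (s ∩ Ioc 0 ((k : ℝ)/N)) := by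
  induction k with
  | zero => simp
  | succ k ih =>
    rw [Finset.sum_range_succ, ih]
    by_cases hN : (N : ℝ) = 0
    · simp [hN]
    have hN0 : (0:ℝ) < N := lt_of_le_of_ne (Nat.cast_nonneg N) (Ne.symm hN)
    have h1 : (0:ℝ) ≤ (k:ℝ)/N := by positivity
    have h2 : (k:ℝ)/N ≤ ((k:ℝ)+1)/N := by gcongr; linarith
    have hU : Ioc (0:ℝ) ((k:ℝ)/N) ∪ Ioc ((k:ℝ)/N) (((k:ℝ)+1)/N) = Ioc 0 (((k:ℝ)+1)/N) :=
      Ioc_union_Ioc_eq_Ioc h1 h2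
    have hd : Disjoint (s ∩ Ioc (0:ℝ) ((k:ℝ)/N)) (s ∩ Ioc ((k:ℝ)/N) (((k:ℝ)+1)/N)) :=
      (Ioc_disjoint_Ioc_of_le le_rfl).mono inter_subset_right inter_subset_right
    rw [← measure_union hd (hs.inter measurableSet_Ioc), ← inter_union_distrib_left, hU]
    push_cast
    ring_nf

lemma inter_Icc_ae (s : Set ℝ) (a b : ℝ) :
    volume (s ∩ Icc a b) = volume (s ∩ Ioc a b) :=
  measure_congr ((Filter.EventuallyEq.refl _ s).inter (Ioc_ae_eq_Icc (μ := volume)).symm)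

lemma oneD (N : ℕ) (hN : 0 < N) (s : Set ℝ) (hs : MeasurableSet s) :
    ∑ l : Fin N, (N : ℝ≥0∞)⁻¹ *
        (volume.restrict (Icc (0:ℝ) 1)) ((fun t : ℝ => (((l : ℕ) : ℝ) + t) / N) ⁻¹' s)
      = volume.restrict (Icc (0:ℝ) 1) s := by
  have hN0 : (0:ℝ) < N := by exact_mod_cast hN
  have hmeas : ∀ c : ℝ, Measurable (fun t : ℝ => (c + t) / (N:ℝ)) := fun c => by fun_prop
  have key : ∀ c : ℝ, (N : ℝ≥0∞)⁻¹ *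
      (volume.restrict (Icc (0:ℝ) 1)) ((fun t : ℝ => (c + t) / N) ⁻¹' s)
      = volume (s ∩ Icc (c/N) ((c+1)/N)) := by
    intro c
    rw [Measure.restrict_apply (hmeas c hs)]
    have hpre : (fun t : ℝ => (c + t) / N) ⁻¹' s ∩ Icc 0 1
        = (fun t : ℝ => (c + t) / N) ⁻¹' (s ∩ Icc (c/N) ((c+1)/N)) := by
      ext t
      simp only [mem_inter_iff, mem_preimage, mem_Icc]
      refine and_congr_right fun _ => ?_
      constructor
      · rintro ⟨h0, h1⟩
        constructor <;> gcongr <;> linarith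
      · rintro ⟨h0, h1⟩
        have g0 := (div_le_div_iff₀ hN0 hN0).mp h0
        have g1 := (div_le_div_iff₀ hN0 hN0).mp h1
        constructor <;> nlinarith
    rw [hpre, ← Measure.map_apply (hmeas c) (hs.inter measurableSet_Icc),
      map_affine_volume N hN c, Measure.smul_apply, smul_eq_mul, ← mul_assoc,
      ENNReal.inv_mul_cancel (by exact_mod_cast hN.ne' : (N:ℝ≥0∞) ≠ 0) (ENNReal.natCast_ne_top N),
      one_mul]
  rw [Measure.restrict_apply hs]
  calc ∑ l : Fin N, (N : ℝ≥0∞)⁻¹ *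
        (volume.restrict (Icc (0:ℝ) 1)) ((fun t : ℝ => (((l : ℕ) : ℝ) + t) / N) ⁻¹' s)
      = ∑ l : Fin N, volume (s ∩ Ioc (((l:ℕ):ℝ)/N) ((((l:ℕ):ℝ)+1)/N)) := by
        refine Finset.sum_congr rfl fun l _ => ?_
        rw [key, inter_Icc_ae]
    _ = ∑ l ∈ Finset.range N, volume (s ∩ Ioc (((l:ℕ):ℝ)/N) ((((l:ℕ):ℝ)+1)/N)) :=
        Fin.sum_univ_eq_sum_range (fun i : ℕ => volume (s ∩ Ioc ((i:ℝ)/N) (((i:ℝ)+1)/N))) N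
    _ = volume (s ∩ Ioc 0 ((N:ℝ)/N)) := tele N s hs N
    _ = volume (s ∩ Icc 0 1) := by
        rw [div_self hN0.ne', ← inter_Icc_ae]

/-- The uniform (Lebesgue) measure on the cube `[0,1]^n`, as a product measure. -/
noncomputable def unifCube (n : ℕ) : Measure (Fin n → ℝ) :=
  Measure.pi fun _ => volume.restrict (Set.Icc (0 : ℝ) 1)

/-- `μ ∈ P_{n+1}^{λ_n}`: every `n`-dimensional marginal of `μ` equals `λ_n`. -/
def allMarginalsUniform (n : ℕ) (μ : Measure (Fin (n + 1) → ℝ)) : Prop :=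
  ∀ j : Fin (n + 1),
    Measure.map (fun x => fun k : Fin n => x (j.succAbove k)) μ = unifCube n

/-- The canonical subcube similarity of ratio `1/N`: `f_i(x)_j = (i_j - 1 + x_j)/N`. -/
noncomputable def subcubeMap (d N : ℕ) (i : Fin d → Fin N) (x : Fin d → ℝ) :
    Fin d → ℝ :=
  fun j => ((i j : ℝ) + x j) / N

lemma subcubeMap_measurable (d N : ℕ) (i : Fin d → Fin N) :
    Measurable (subcubeMap d N i) :=
  measurable_pi_lambda _ fun j => ((measurable_pi_apply j).const_add _).div_const _

lemma sum_subcube_unifCube (n N : ℕ) (hN : 0 < N) :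
    ∑ i : Fin n → Fin N, ((N : ℝ≥0∞) ^ n)⁻¹ • Measure.map (subcubeMap n N i) (unifCube n)
      = unifCube n := by
  refine Eq.symm (Measure.pi_eq fun s hs => ?_)
  rw [Measure.finset_sum_apply]
  have hcoef : ((N : ℝ≥0∞) ^ n)⁻¹ = ∏ _j : Fin n, (N : ℝ≥0∞)⁻¹ := by
    rw [Finset.prod_const, ENNReal.inv_pow]
    simp
  calc ∑ i : Fin n → Fin N,
        (((N : ℝ≥0∞) ^ n)⁻¹ • Measure.map (subcubeMap n N i) (unifCube n)) (Set.pi univ s)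
      = ∑ i : Fin n → Fin N, ∏ j : Fin n,
          ((N : ℝ≥0∞)⁻¹ *
            (volume.restrict (Icc (0:ℝ) 1)) ((fun t : ℝ => (((i j : ℕ) : ℝ) + t) / N) ⁻¹' (s j))) := by
        refine Finset.sum_congr rfl fun i _ => ?_
        rw [Measure.smul_apply, smul_eq_mul,
          Measure.map_apply (subcubeMap_measurable n N i) (MeasurableSet.univ_pi hs)]
        have hpre : subcubeMap n N i ⁻¹' (Set.pi univ s)
            = Set.pi univ (fun j => (fun t : ℝ => (((i j : ℕ) : ℝ) + t) / N) ⁻¹' (s j)) := by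
          ext x; simp [subcubeMap, Set.mem_pi]
        rw [hpre]
        rw [show unifCube n = Measure.pi fun _ => volume.restrict (Set.Icc (0 : ℝ) 1) from rfl,
          Measure.pi_pi, hcoef, ← Finset.prod_mul_distrib]
    _ = ∏ j : Fin n, ∑ l : Fin N,
          ((N : ℝ≥0∞)⁻¹ *
            (volume.restrict (Icc (0:ℝ) 1)) ((fun t : ℝ => (((l : ℕ) : ℝ) + t) / N) ⁻¹' (s j))) := by
        rw [Finset.prod_univ_sum]
        simp
    _ = ∏ j : Fin n, (volume.restrict (Icc (0:ℝ) 1)) (s j) := by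
        exact Finset.prod_congr rfl fun j _ => oneD N hN (s j) (hs j)

lemma map_finset_sum' {α β ι : Type*} [MeasurableSpace α] [MeasurableSpace β]
    {f : α → β} (hf : Measurable f) (s : Finset ι) (μ : ι → Measure α) :
    Measure.map f (∑ i ∈ s, μ i) = ∑ i ∈ s, Measure.map f (μ i) := by
  classical
  induction s using Finset.induction with
  | empty => simp
  | insert _ _ h ih => rw [Finset.sum_insert h, Finset.sum_insert h, Measure.map_add _ _ hf, ih]

/-- with `d = n + 1 ≥ 3`, if `τ` satisfies the uniformity condition
w.r.t. every coordinate, then the Markov operator `V_τ(μ) = Σ_i τ(i)·μ^{f_i}` maps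
`P_d^{λ_{d-1}}` into itself. -/
theorem stmt12 (n N : ℕ) (hn : 2 ≤ n) (hN : 2 ≤ N)
    (τ : (Fin (n + 1) → Fin N) → ℝ≥0∞)
    (hτ : ∀ (j₀ : Fin (n + 1)) (i : Fin (n + 1) → Fin N),
      ∑ l : Fin N, τ (Function.update i j₀ l) = ((N : ℝ≥0∞) ^ n)⁻¹)
    (μ : Measure (Fin (n + 1) → ℝ)) [IsProbabilityMeasure μ]
    (hμ : allMarginalsUniform n μ) :
    IsProbabilityMeasure
        (∑ i : Fin (n + 1) → Fin N, τ i • Measure.map (subcubeMap (n + 1) N i) μ) ∧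
      allMarginalsUniform n
        (∑ i : Fin (n + 1) → Fin N, τ i • Measure.map (subcubeMap (n + 1) N i) μ) := by
  have hN0 : 0 < N := by omega
  haveI : NeZero N := ⟨hN0.ne'⟩
  set ν := ∑ i : Fin (n + 1) → Fin N, τ i • Measure.map (subcubeMap (n + 1) N i) μ with hν
  have hπ : ∀ j : Fin (n + 1), Measurable (fun x : Fin (n+1) → ℝ => fun k : Fin n => x (j.succAbove k)) :=
    fun j => measurable_pi_lambda _ fun k => measurable_pi_apply _
  have hmarg : allMarginalsUniform n ν := by
    intro j
    rw [hν, map_finset_sum' (hπ j)]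
    have hterm : ∀ i : Fin (n + 1) → Fin N,
        Measure.map (fun x => fun k : Fin n => x (j.succAbove k))
            (τ i • Measure.map (subcubeMap (n + 1) N i) μ)
          = τ i • Measure.map (subcubeMap n N (fun k => i (j.succAbove k))) (unifCube n) := by
      intro i
      rw [Measure.map_smul, Measure.map_map (hπ j) (subcubeMap_measurable _ _ _)]
      have hc : (fun x : Fin (n+1) → ℝ => fun k : Fin n => x (j.succAbove k)) ∘ subcubeMap (n+1) N i
          = (subcubeMap n N (fun k => i (j.succAbove k))) ∘
              (fun x => fun k : Fin n => x (j.succAbove k)) := by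
        funext x; rfl
      rw [hc, ← Measure.map_map (subcubeMap_measurable _ _ _) (hπ j), hμ j]
    simp_rw [hterm]
    -- reindex the sum over Fin (n+1) → Fin N via insertNthEquiv at j
    rw [← Equiv.sum_comp (Fin.insertNthEquiv (fun _ => Fin N) j)]
    rw [Fintype.sum_prod_type_right]
    have hfix : ∀ (i' : Fin n → Fin N) (l : Fin N),
        (fun k => (Fin.insertNthEquiv (fun _ => Fin N) j) (l, i') (j.succAbove k)) = i' := by
      intro i' l; funext k
      simp [Fin.insertNthEquiv, Fin.insertNth_apply_succAbove]
    calc ∑ i' : Fin n → Fin N, ∑ l : Fin N,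
          τ ((Fin.insertNthEquiv (fun _ => Fin N) j) (l, i')) •
            Measure.map (subcubeMap n N
              (fun k => (Fin.insertNthEquiv (fun _ => Fin N) j) (l, i') (j.succAbove k))) (unifCube n)
        = ∑ i' : Fin n → Fin N,
            ((N : ℝ≥0∞) ^ n)⁻¹ • Measure.map (subcubeMap n N i') (unifCube n) := by
          refine Finset.sum_congr rfl fun i' _ => ?_
          have : ∑ l : Fin N, τ ((Fin.insertNthEquiv (fun _ => Fin N) j) (l, i'))
              = ((N : ℝ≥0∞) ^ n)⁻¹ := by
            rw [← hτ j (j.insertNth 0 i')]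
            refine Finset.sum_congr rfl fun l _ => ?_
            congr 1
            simp [Fin.insertNthEquiv, Fin.update_insertNth]
          rw [← this, Finset.sum_smul]
          refine Finset.sum_congr rfl fun l _ => ?_
          rw [hfix i' l]
      _ = unifCube n := sum_subcube_unifCube n N hN0
  refine ⟨?_, hmarg⟩
  constructor
  have h0 : Measure.map (fun x => fun k : Fin n => x ((0 : Fin (n+1)).succAbove k)) ν = unifCube n :=
    hmarg 0
  have : ν univ = (Measure.map (fun x => fun k : Fin n => x ((0 : Fin (n+1)).succAbove k)) ν) univ := by
    rw [Measure.map_apply (hπ 0) MeasurableSet.univ]; rfl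
  rw [this, h0]
  rw [show unifCube n = Measure.pi fun _ => volume.restrict (Set.Icc (0 : ℝ) 1) from rfl,
    Measure.pi_univ]
  simp [Real.volume_Icc]
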